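/- Let G = (V, E) be a finite simple undirected graph with n vertices, let k be a natural number, and let w_F, w_M : V → ℕ be weight functions; define the weight of a pair (Y, M) with M ⊆ Y ⊆ V as w(Y, M) = Σ_{y ∈ Y} w_F(y) + Σ_{m ∈ M} w_M(m). Then for every w₀ ∈ ℕ and every j with 0 ≤ j ≤ n − k − 1, the number of triples ((Y, M), (Y_L, Y_R)) such that M ⊆ Y ⊆ V, |Y| = n − k, (Y_L, Y_R) is a consistent cut of G[Y], M ⊆ Y_L, w(Y, M) = w₀, the number of edges of G[Y] equals j, and |M| = n − k − j, is congruent modulo 2 to the number of pairs (Y, M) such that M ⊆ Y ⊆ V, |Y| = n − k, G[Y] is a forest, every connected component of G[Y] contains a vertex of M, w(Y, M) = w₀, the number of edges of G[Y] equals j, and |M| = n − k − j. -/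

import Mathlib

/-- `(YL, YR)` is a consistent cut of the subgraph of `G` induced by `Y`:
it partitions `Y` and no edge of `G` joins a vertex of `YL` to a vertex of `YR`. -/
def ConsCut {V : Type} [DecidableEq V] (G : SimpleGraph V) (Y YL YR : Finset V) : Prop :=
  YL ∪ YR = Y ∧ Disjoint YL YR ∧ ∀ u ∈ YL, ∀ v ∈ YR, ¬ G.Adj u v

/-- The number of edges of the subgraph of `G` induced by `Y`. -/
noncomputable def edgeCountIn {V : Type} [DecidableEq V] (G : SimpleGraph V) (Y : Finset V) : ℕ :=
  Set.ncard {e : Sym2 V | e ∈ G.edgeSet ∧ ∀ v ∈ e, v ∈ Y}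

section Aux

open SimpleGraph

variable {W : Type*}

lemma fcc_reach_delete_cases {H : SimpleGraph W} {u v x y : W}
    (p : H.Walk x y) :
    (H.deleteEdges {s(u,v)}).Reachable x y ∨
    ((H.deleteEdges {s(u,v)}).Reachable x u ∧ (H.deleteEdges {s(u,v)}).Reachable v y) ∨
    ((H.deleteEdges {s(u,v)}).Reachable x v ∧ (H.deleteEdges {s(u,v)}).Reachable u y) := by
  set H' := H.deleteEdges {s(u,v)} with hH'
  induction p with
  | nil => exact Or.inl (Reachable.refl _)
  | @cons a b c hab p ih =>
    by_cases he : s(a, b) = s(u, v)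
    · rw [Sym2.eq_iff] at he
      rcases he with ⟨rfl, rfl⟩ | ⟨rfl, rfl⟩
      · rcases ih with h | ⟨h1, h2⟩ | ⟨h1, h2⟩
        · exact Or.inr (Or.inl ⟨Reachable.refl _, h⟩)
        · exact Or.inl (h1.symm.trans h2)
        · exact Or.inl h2
      · rcases ih with h | ⟨h1, h2⟩ | ⟨h1, h2⟩
        · exact Or.inr (Or.inr ⟨Reachable.refl _, h⟩)
        · exact Or.inl h2
        · exact Or.inl (h1.symm.trans h2)
    · have hab' : H'.Adj a b := by
        rw [hH', deleteEdges_adj]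
        exact ⟨hab, by simpa using he⟩
      rcases ih with h | ⟨h1, h2⟩ | ⟨h1, h2⟩
      · exact Or.inl (hab'.reachable.trans h)
      · exact Or.inr (Or.inl ⟨hab'.reachable.trans h1, h2⟩)
      · exact Or.inr (Or.inr ⟨hab'.reachable.trans h1, h2⟩)

lemma fcc_cc_delete_le [Finite W] (H : SimpleGraph W) (u v : W) :
    Nat.card (H.deleteEdges {s(u,v)}).ConnectedComponent ≤
      Nat.card H.ConnectedComponent + 1 := by
  classical
  set H' := H.deleteEdges {s(u,v)} with hH'
  have hle : H' ≤ H := deleteEdges_le _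
  let φ : H'.ConnectedComponent → H.ConnectedComponent :=
    ConnectedComponent.map (Hom.ofLE hle)
  let ψ : H'.ConnectedComponent → Option H.ConnectedComponent :=
    fun D => if D = H'.connectedComponentMk v then none else some (φ D)
  have hinj : Function.Injective ψ := by
    intro D₁ D₂ h
    by_cases h1 : D₁ = H'.connectedComponentMk v <;>
      by_cases h2 : D₂ = H'.connectedComponentMk v
    · exact h1.trans h2.symm
    · simp [ψ, h1, h2] at h
    · simp [ψ, h1, h2] at h
    · simp only [ψ, if_neg h1, if_neg h2, Option.some.injEq] at h
      revert h h1 h2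
      refine ConnectedComponent.ind₂ (fun x y h1 h2 h => ?_) D₁ D₂
      have : H.connectedComponentMk x = H.connectedComponentMk y := by
        simpa [φ, ConnectedComponent.map_mk] using h
      obtain ⟨p⟩ := ConnectedComponent.exact this
      rcases fcc_reach_delete_cases (u := u) (v := v) p with hr | ⟨hr1, hr2⟩ | ⟨hr1, hr2⟩
      · exact ConnectedComponent.sound hr
      · exact absurd (ConnectedComponent.sound hr2.symm) h2
      · exact absurd (ConnectedComponent.sound hr1) h1
  haveI := Fintype.ofFinite H.ConnectedComponent
  haveI := Fintype.ofFinite H'.ConnectedComponent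
  have := Fintype.card_le_of_injective ψ hinj
  rw [Fintype.card_option] at this
  simpa [Nat.card_eq_fintype_card] using this

lemma fcc_cc_delete_le_of_reach [Finite W] (H : SimpleGraph W) (u v : W)
    (hr : (H.deleteEdges {s(u,v)}).Reachable u v) :
    Nat.card (H.deleteEdges {s(u,v)}).ConnectedComponent ≤
      Nat.card H.ConnectedComponent := by
  classical
  set H' := H.deleteEdges {s(u,v)} with hH'
  have hle : H' ≤ H := deleteEdges_le _
  let φ : H'.ConnectedComponent → H.ConnectedComponent :=
    ConnectedComponent.map (Hom.ofLE hle)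
  have hinj : Function.Injective φ := by
    refine ConnectedComponent.ind₂ (fun x y h => ?_)
    have : H.connectedComponentMk x = H.connectedComponentMk y := by
      simpa [φ, ConnectedComponent.map_mk] using h
    obtain ⟨p⟩ := ConnectedComponent.exact this
    rcases fcc_reach_delete_cases (u := u) (v := v) p with h | ⟨h1, h2⟩ | ⟨h1, h2⟩
    · exact ConnectedComponent.sound h
    · exact ConnectedComponent.sound ((h1.trans hr).trans h2)
    · exact ConnectedComponent.sound ((h1.trans hr.symm).trans h2)
  exact Nat.card_le_card_of_injective φ hinj

lemma fcc_card_le_edges_add_cc [Finite W] (H : SimpleGraph W) :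
    Nat.card W ≤ Nat.card H.edgeSet + Nat.card H.ConnectedComponent ∧
    (¬ H.IsAcyclic →
      Nat.card W + 1 ≤ Nat.card H.edgeSet + Nat.card H.ConnectedComponent) := by
  classical
  generalize hn : Nat.card H.edgeSet = n
  induction n using Nat.strong_induction_on generalizing H with
  | _ n ih =>
  by_cases hne : H.edgeSet = ∅
  · have hbot : H = ⊥ := by rwa [edgeSet_eq_empty] at hne
    subst hbot
    have hbij : Function.Bijective (⊥ : SimpleGraph W).connectedComponentMk := by
      constructor
      · intro a b hab
        exact reachable_bot.mp (ConnectedComponent.exact hab)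
      · exact Quot.mk_surjective
    have hcard : Nat.card W = Nat.card (⊥ : SimpleGraph W).ConnectedComponent :=
      Nat.card_eq_of_bijective _ hbij
    exact ⟨hcard.le.trans (Nat.le_add_left _ _), fun hna => absurd isAcyclic_bot hna⟩
  · have hadj : ∃ u v, H.Adj u v := by
      obtain ⟨e, he⟩ := Set.nonempty_iff_ne_empty.mpr hne
      induction e using Sym2.ind with
      | _ u v => exact ⟨u, v, he⟩
    obtain ⟨u, v, huv⟩ := hadj
    have hnpos : 0 < n := by
      rw [← hn]
      haveI : Nonempty H.edgeSet := ⟨⟨s(u, v), huv⟩⟩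
      exact Nat.card_pos
    have hedel : ∀ a b : W, H.Adj a b →
        Nat.card (H.deleteEdges {s(a, b)}).edgeSet = n - 1 := by
      intro a b hab
      rw [Nat.card_coe_set_eq, edgeSet_deleteEdges,
        Set.ncard_diff_singleton_of_mem (H.mem_edgeSet.mpr hab)]
      rw [Nat.card_coe_set_eq] at hn
      rw [hn]
    constructor
    · have h1 := (ih (n - 1) (by omega) (H.deleteEdges {s(u, v)}) (hedel u v huv)).1
      have h2 := fcc_cc_delete_le H u v
      omega
    · intro hna
      rw [isAcyclic_iff_forall_edge_isBridge] at hna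
      push_neg at hna
      obtain ⟨e, he, hnb⟩ := hna
      induction e using Sym2.ind with
      | _ a b =>
      rw [isBridge_iff] at hnb
      push_neg at hnb
      have hab : H.Adj a b := he
      have hreach : (H.deleteEdges {s(a, b)}).Reachable a b := hnb
      have h1 := (ih (n - 1) (by omega) (H.deleteEdges {s(a, b)}) (hedel a b hab)).1
      have h2 := fcc_cc_delete_le_of_reach H a b hreach
      omega

variable {V : Type} [Fintype V] [DecidableEq V]

lemma fcc_edgeCount_eq (G : SimpleGraph V) (Y : Finset V) :
    Nat.card (G.induce (↑Y : Set V)).edgeSet = edgeCountIn G Y := by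
  classical
  have himg : (Sym2.map (Subtype.val : (↑Y : Set V) → V)) '' (G.induce (↑Y : Set V)).edgeSet
      = {e : Sym2 V | e ∈ G.edgeSet ∧ ∀ v ∈ e, v ∈ Y} := by
    ext e
    constructor
    · rintro ⟨e', he', rfl⟩
      induction e' using Sym2.ind with
      | _ a b =>
        have hab : G.Adj ↑a ↑b := he'
        refine ⟨hab, ?_⟩
        intro w hw
        rw [Sym2.map_pair_eq, Sym2.mem_iff] at hw
        rcases hw with rfl | rfl
        · exact a.2
        · exact b.2
    · rintro ⟨he, hY⟩
      induction e using Sym2.ind with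
      | _ a b =>
        have ha : a ∈ Y := hY a (Sym2.mem_mk_left a b)
        have hb : b ∈ Y := hY b (Sym2.mem_mk_right a b)
        refine ⟨s(⟨a, ha⟩, ⟨b, hb⟩), ?_, by simp [Sym2.map_pair_eq]⟩
        exact he
  rw [edgeCountIn, ← himg, Nat.card_coe_set_eq,
    Set.ncard_image_of_injective _ (Sym2.map.injective Subtype.val_injective)]

lemma fcc_side_eq_of_adj {G : SimpleGraph V} {Y YL YR : Finset V}
    (hcut : ConsCut G Y YL YR) {x z : V} (hx : x ∈ Y) (hz : z ∈ Y) (hadj : G.Adj x z) :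
    (x ∈ YL ↔ z ∈ YL) := by
  obtain ⟨hun, hdisj, hne⟩ := hcut
  have hx' : x ∈ YL ∪ YR := by rw [hun]; exact hx
  have hz' : z ∈ YL ∪ YR := by rw [hun]; exact hz
  rw [Finset.mem_union] at hx' hz'
  constructor
  · intro hxl
    rcases hz' with h | h
    · exact h
    · exact absurd hadj (hne _ hxl _ h)
  · intro hzl
    rcases hx' with h | h
    · exact h
    · exact absurd hadj.symm (hne _ hzl _ h)

lemma fcc_side_eq_of_reachable {G : SimpleGraph V} {Y YL YR : Finset V}
    (hcut : ConsCut G Y YL YR) {a b : ↥(↑Y : Set V)}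
    (h : (G.induce (↑Y : Set V)).Reachable a b) :
    ((a : V) ∈ YL ↔ (b : V) ∈ YL) := by
  obtain ⟨p⟩ := h
  induction p with
  | nil => exact Iff.rfl
  | @cons x z y hadj p ih =>
    exact (fcc_side_eq_of_adj hcut x.2 z.2 hadj).trans ih

lemma fcc_acyclic (G : SimpleGraph V) (Y M : Finset V) {j : ℕ}
    (hje : edgeCountIn G Y = j) (hMcard : M.card = Y.card - j) (hjq : j ≤ Y.card)
    (hall : ∀ c : (G.induce (↑Y : Set V)).ConnectedComponent, ∃ v : ↥(↑Y : Set V),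
      (G.induce (↑Y : Set V)).connectedComponentMk v = c ∧ (v : V) ∈ M) :
    (G.induce (↑Y : Set V)).IsAcyclic := by
  by_contra hna
  have h2 := (fcc_card_le_edges_add_cc (G.induce (↑Y : Set V))).2 hna
  have hW : Nat.card ↥(↑Y : Set V) = Y.card := by
    rw [Nat.card_coe_set_eq, Set.ncard_coe_finset]
  have hE : Nat.card (G.induce (↑Y : Set V)).edgeSet = j := by
    rw [fcc_edgeCount_eq]; exact hje
  have hinj : Function.Injective
      (fun c => (⟨((hall c).choose : V), (hall c).choose_spec.2⟩ : ↥(↑M : Set V))) := by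
    intro c1 c2 h
    simp only [Subtype.mk.injEq] at h
    have hv : ((hall c1).choose : V) = ((hall c2).choose : V) := h
    have hch : (hall c1).choose = (hall c2).choose := Subtype.ext hv
    rw [← (hall c1).choose_spec.1, ← (hall c2).choose_spec.1, hch]
  have hc : Nat.card (G.induce (↑Y : Set V)).ConnectedComponent ≤ M.card := by
    have := Nat.card_le_card_of_injective _ hinj
    rwa [Nat.card_coe_set_eq, Set.ncard_coe_finset] at this
  rw [hW, hE] at h2
  omega

lemma fcc_cut_eq {G : SimpleGraph V} {Y M YL YR : Finset V}
    (hcut : ConsCut G Y YL YR) (hM : M ⊆ YL)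
    (hall : ∀ c : (G.induce (↑Y : Set V)).ConnectedComponent, ∃ v : ↥(↑Y : Set V),
      (G.induce (↑Y : Set V)).connectedComponentMk v = c ∧ (v : V) ∈ M) :
    YL = Y ∧ YR = ∅ := by
  have hYR : YR = ∅ := by
    by_contra hne
    obtain ⟨x, hx⟩ := Finset.nonempty_iff_ne_empty.mpr hne
    have hxY : x ∈ Y := by rw [← hcut.1]; exact Finset.mem_union_right _ hx
    have hxY' : x ∈ (↑Y : Set V) := hxY
    obtain ⟨v, hv, hvM⟩ :=
      hall ((G.induce (↑Y : Set V)).connectedComponentMk ⟨x, hxY'⟩)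
    have hreach := SimpleGraph.ConnectedComponent.exact hv
    have hxl := (fcc_side_eq_of_reachable hcut hreach).mp (hM hvM)
    exact (Finset.disjoint_left.mp hcut.2.1 hxl) hx
  refine ⟨?_, hYR⟩
  rw [← hcut.1, hYR, Finset.union_empty]

lemma fcc_flip_cut {G : SimpleGraph V} {Y YL YR C : Finset V}
    (hcut : ConsCut G Y YL YR)
    (hcl : ∀ a b : ↥(↑Y : Set V), (G.induce (↑Y : Set V)).Adj a b →
      ((a : V) ∈ C ↔ (b : V) ∈ C)) :
    ConsCut G Y ((YL \ C) ∪ (YR ∩ C)) ((YR \ C) ∪ (YL ∩ C)) := by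
  obtain ⟨hun, hdisj, hne⟩ := hcut
  have hLY : ∀ x, x ∈ YL → x ∈ Y := fun x h => hun ▸ Finset.mem_union_left _ h
  have hRY : ∀ x, x ∈ YR → x ∈ Y := fun x h => hun ▸ Finset.mem_union_right _ h
  refine ⟨?_, ?_, ?_⟩
  · ext x
    rw [← hun]
    simp only [Finset.mem_union, Finset.mem_sdiff, Finset.mem_inter]
    tauto
  · rw [Finset.disjoint_left] at hdisj ⊢
    simp only [Finset.mem_union, Finset.mem_sdiff, Finset.mem_inter]
    tauto
  · intro u hu v hv hadj
    simp only [Finset.mem_union, Finset.mem_sdiff, Finset.mem_inter] at hu hv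
    have huY : u ∈ Y := by rcases hu with ⟨h, _⟩ | ⟨h, _⟩; exacts [hLY u h, hRY u h]
    have hvY : v ∈ Y := by rcases hv with ⟨h, _⟩ | ⟨h, _⟩; exacts [hRY v h, hLY v h]
    have hadj' : (G.induce (↑Y : Set V)).Adj ⟨u, huY⟩ ⟨v, hvY⟩ := hadj
    have hC := hcl ⟨u, huY⟩ ⟨v, hvY⟩ hadj'
    simp only [Subtype.coe_mk] at hC
    by_cases hc : u ∈ C
    · have hvC : v ∈ C := hC.mp hc
      have huR : u ∈ YR := by tauto
      have hvL : v ∈ YL := by tauto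
      exact hne v hvL u huR hadj.symm
    · have hvC : v ∉ C := fun h => hc (hC.mpr h)
      have huL : u ∈ YL := by tauto
      have hvR : v ∈ YR := by tauto
      exact hne u huL v hvR hadj

lemma fcc_swap_swap (A B C : Finset V) :
    ((A \ C ∪ B ∩ C) \ C) ∪ ((B \ C ∪ A ∩ C) ∩ C) = A := by
  ext x
  simp only [Finset.mem_union, Finset.mem_sdiff, Finset.mem_inter]
  tauto

open scoped Classical in
/-- The finset of vertices of the chosen `M`-free component (if one exists). -/
noncomputable def fccBadC (G : SimpleGraph V) (p : Finset V × Finset V) : Finset V :=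
  if h : ∃ c : (G.induce (↑p.1 : Set V)).ConnectedComponent,
      ∀ v : ↥(↑p.1 : Set V),
        (G.induce (↑p.1 : Set V)).connectedComponentMk v = c → (v : V) ∉ p.2
  then p.1.filter (fun x => ∀ hx : x ∈ (↑p.1 : Set V),
      (G.induce (↑p.1 : Set V)).connectedComponentMk ⟨x, hx⟩ = h.choose)
  else ∅

/-- The flip involution for the cut-and-count argument. -/
noncomputable def fccFlip (G : SimpleGraph V)
    (t : (Finset V × Finset V) × Finset V × Finset V) :
    (Finset V × Finset V) × Finset V × Finset V :=
  (t.1, ((t.2.1 \ fccBadC G t.1) ∪ (t.2.2 ∩ fccBadC G t.1),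
         (t.2.2 \ fccBadC G t.1) ∪ (t.2.1 ∩ fccBadC G t.1)))

lemma fccBadC_mem (G : SimpleGraph V) (p : Finset V × Finset V)
    (hex : ∃ c : (G.induce (↑p.1 : Set V)).ConnectedComponent,
      ∀ v : ↥(↑p.1 : Set V),
        (G.induce (↑p.1 : Set V)).connectedComponentMk v = c → (v : V) ∉ p.2) {x : V} :
    x ∈ fccBadC G p ↔ x ∈ p.1 ∧ ∀ hx : x ∈ (↑p.1 : Set V),
      (G.induce (↑p.1 : Set V)).connectedComponentMk ⟨x, hx⟩ = hex.choose := by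
  classical
  rw [fccBadC, dif_pos hex, Finset.mem_filter]

lemma fccBadC_closed (G : SimpleGraph V) (p : Finset V × Finset V)
    (hex : ∃ c : (G.induce (↑p.1 : Set V)).ConnectedComponent,
      ∀ v : ↥(↑p.1 : Set V),
        (G.induce (↑p.1 : Set V)).connectedComponentMk v = c → (v : V) ∉ p.2)
    (a b : ↥(↑p.1 : Set V)) (hadj : (G.induce (↑p.1 : Set V)).Adj a b) :
    ((a : V) ∈ fccBadC G p ↔ (b : V) ∈ fccBadC G p) := by
  have hcm : (G.induce (↑p.1 : Set V)).connectedComponentMk a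
      = (G.induce (↑p.1 : Set V)).connectedComponentMk b :=
    SimpleGraph.ConnectedComponent.connectedComponentMk_eq_of_adj hadj
  rw [fccBadC_mem G p hex, fccBadC_mem G p hex]
  constructor
  · rintro ⟨-, h⟩
    refine ⟨b.2, fun hx => ?_⟩
    rw [Subtype.coe_eta, ← hcm]
    have := h a.2
    rwa [Subtype.coe_eta] at this
  · rintro ⟨-, h⟩
    refine ⟨a.2, fun hx => ?_⟩
    rw [Subtype.coe_eta, hcm]
    have := h b.2
    rwa [Subtype.coe_eta] at this

lemma fccBadC_notM (G : SimpleGraph V) (p : Finset V × Finset V)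
    (hex : ∃ c : (G.induce (↑p.1 : Set V)).ConnectedComponent,
      ∀ v : ↥(↑p.1 : Set V),
        (G.induce (↑p.1 : Set V)).connectedComponentMk v = c → (v : V) ∉ p.2)
    {x : V} (hx : x ∈ p.2) : x ∉ fccBadC G p := by
  intro hmem
  rw [fccBadC_mem G p hex] at hmem
  obtain ⟨hxY, hcm⟩ := hmem
  have hxY' : x ∈ (↑p.1 : Set V) := hxY
  exact hex.choose_spec ⟨x, hxY'⟩ (hcm hxY') hx

lemma fccBadC_nonempty (G : SimpleGraph V) (p : Finset V × Finset V)
    (hex : ∃ c : (G.induce (↑p.1 : Set V)).ConnectedComponent,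
      ∀ v : ↥(↑p.1 : Set V),
        (G.induce (↑p.1 : Set V)).connectedComponentMk v = c → (v : V) ∉ p.2) :
    ∃ x, x ∈ fccBadC G p := by
  obtain ⟨v₀, hv₀⟩ := Quot.exists_rep hex.choose
  refine ⟨(v₀ : V), ?_⟩
  rw [fccBadC_mem G p hex]
  refine ⟨v₀.2, fun hx => ?_⟩
  rw [Subtype.coe_eta]
  exact hv₀

end Aux

/-- Cut&Count correctness for **Feedback Vertex Set**: with `n = |V|`, for every target weight
`w₀` and every `j ≤ n - k - 1`, the number of tuples `((Y, M), (Y_L, Y_R))` with `M ⊆ Y`,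
`|Y| = n - k`, `(Y_L, Y_R)` a consistent cut of `G[Y]` with `M ⊆ Y_L`, weight `w₀`, `j` edges
in `G[Y]` and `|M| = n - k - j`, is congruent modulo 2 to the number of pairs `(Y, M)` with
`M ⊆ Y`, `|Y| = n - k`, `G[Y]` a forest each of whose connected components meets `M`,
weight `w₀`, `j` edges in `G[Y]` and `|M| = n - k - j`. -/
theorem fvs_cut_and_count {V : Type} [Fintype V] [DecidableEq V] (G : SimpleGraph V)
    (k : ℕ) (wF wM : V → ℕ) (w₀ : ℕ) (j : ℕ) (hj : j ≤ Fintype.card V - k - 1) :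
    Set.ncard {t : (Finset V × Finset V) × Finset V × Finset V |
        t.1.2 ⊆ t.1.1 ∧ t.1.1.card = Fintype.card V - k ∧
        ConsCut G t.1.1 t.2.1 t.2.2 ∧ t.1.2 ⊆ t.2.1 ∧
        (∑ y ∈ t.1.1, wF y) + (∑ m ∈ t.1.2, wM m) = w₀ ∧
        edgeCountIn G t.1.1 = j ∧ t.1.2.card = Fintype.card V - k - j} ≡
      Set.ncard {p : Finset V × Finset V |
        p.2 ⊆ p.1 ∧ p.1.card = Fintype.card V - k ∧
        (G.induce (p.1 : Set V)).IsAcyclic ∧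
        (∀ c : (G.induce (p.1 : Set V)).ConnectedComponent,
          ∃ v : (p.1 : Set V), (G.induce (p.1 : Set V)).connectedComponentMk v = c ∧
            (v : V) ∈ p.2) ∧
        (∑ y ∈ p.1, wF y) + (∑ m ∈ p.2, wM m) = w₀ ∧
        edgeCountIn G p.1 = j ∧ p.2.card = Fintype.card V - k - j} [MOD 2] := by
  classical
  have hjq : j ≤ Fintype.card V - k := hj.trans (Nat.sub_le _ _)
  -- abbreviations
  set AM : Finset V × Finset V → Prop := fun p =>
    ∀ c : (G.induce (↑p.1 : Set V)).ConnectedComponent,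
      ∃ v : ↥(↑p.1 : Set V),
        (G.induce (↑p.1 : Set V)).connectedComponentMk v = c ∧ (v : V) ∈ p.2 with hAM
  set Base : Finset V × Finset V → Prop := fun p =>
    p.2 ⊆ p.1 ∧ p.1.card = Fintype.card V - k ∧
    (∑ y ∈ p.1, wF y) + (∑ m ∈ p.2, wM m) = w₀ ∧
    edgeCountIn G p.1 = j ∧ p.2.card = Fintype.card V - k - j with hBase
  set CutP : (Finset V × Finset V) × Finset V × Finset V → Prop := fun t =>
    ConsCut G t.1.1 t.2.1 t.2.2 ∧ t.1.2 ⊆ t.2.1 with hCutP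
  have hTeq : {t : (Finset V × Finset V) × Finset V × Finset V |
        t.1.2 ⊆ t.1.1 ∧ t.1.1.card = Fintype.card V - k ∧
        ConsCut G t.1.1 t.2.1 t.2.2 ∧ t.1.2 ⊆ t.2.1 ∧
        (∑ y ∈ t.1.1, wF y) + (∑ m ∈ t.1.2, wM m) = w₀ ∧
        edgeCountIn G t.1.1 = j ∧ t.1.2.card = Fintype.card V - k - j}
      = {t : (Finset V × Finset V) × Finset V × Finset V | Base t.1 ∧ CutP t} := by
    ext t
    simp only [Set.mem_setOf_eq, hBase, hCutP]
    tauto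
  have hReq : {p : Finset V × Finset V |
        p.2 ⊆ p.1 ∧ p.1.card = Fintype.card V - k ∧
        (G.induce (p.1 : Set V)).IsAcyclic ∧
        (∀ c : (G.induce (p.1 : Set V)).ConnectedComponent,
          ∃ v : (p.1 : Set V), (G.induce (p.1 : Set V)).connectedComponentMk v = c ∧
            (v : V) ∈ p.2) ∧
        (∑ y ∈ p.1, wF y) + (∑ m ∈ p.2, wM m) = w₀ ∧
        edgeCountIn G p.1 = j ∧ p.2.card = Fintype.card V - k - j}
      = {p : Finset V × Finset V | Base p ∧ AM p} := by
    ext p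
    simp only [Set.mem_setOf_eq, hBase, hAM]
    constructor
    · rintro ⟨h1, h2, h3, h4, h5, h6, h7⟩
      exact ⟨⟨h1, h2, h5, h6, h7⟩, h4⟩
    · rintro ⟨⟨h1, h2, h5, h6, h7⟩, h4⟩
      refine ⟨h1, h2, ?_, h4, h5, h6, h7⟩
      exact fcc_acyclic G p.1 p.2 h6 (by rw [h2]; exact h7)
        (by rw [h2]; exact hjq) h4
  rw [hTeq, hReq]
  -- split the triple set
  have hsplit : {t : (Finset V × Finset V) × Finset V × Finset V | Base t.1 ∧ CutP t}
      = {t : (Finset V × Finset V) × Finset V × Finset V | (Base t.1 ∧ CutP t) ∧ AM t.1}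
        ∪ {t : (Finset V × Finset V) × Finset V × Finset V |
            (Base t.1 ∧ CutP t) ∧ ¬ AM t.1} := by
    ext t; simp only [Set.mem_setOf_eq, Set.mem_union]; tauto
  have hdisj : Disjoint
      {t : (Finset V × Finset V) × Finset V × Finset V | (Base t.1 ∧ CutP t) ∧ AM t.1}
      {t : (Finset V × Finset V) × Finset V × Finset V | (Base t.1 ∧ CutP t) ∧ ¬ AM t.1} := by
    rw [Set.disjoint_left]
    rintro t ⟨-, h⟩ ⟨-, h'⟩
    exact h' h
  rw [hsplit, Set.ncard_union_eq hdisj (Set.toFinite _) (Set.toFinite _)]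
  -- the AM part is in bijection with the pair set
  have h₀ : {t : (Finset V × Finset V) × Finset V × Finset V | (Base t.1 ∧ CutP t) ∧ AM t.1}
      = (fun p : Finset V × Finset V => (p, p.1, (∅ : Finset V))) ''
        {p : Finset V × Finset V | Base p ∧ AM p} := by
    ext t
    simp only [Set.mem_setOf_eq, Set.mem_image]
    constructor
    · rintro ⟨⟨hB, hcut, hMsub⟩, hAMt⟩
      obtain ⟨hYL, hYR⟩ := fcc_cut_eq hcut hMsub hAMt
      refine ⟨t.1, ⟨hB, hAMt⟩, ?_⟩
      have : t.2 = (t.1.1, (∅ : Finset V)) := by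
        rw [← hYL, ← hYR]
      rw [← this]
    · rintro ⟨p, ⟨hB, hAMp⟩, rfl⟩
      refine ⟨⟨hB, ?_, hB.1⟩, hAMp⟩
      exact ⟨Finset.union_empty _, Finset.disjoint_empty_right _,
        fun u _ v hv => absurd hv (Finset.notMem_empty v)⟩
  have h₀card : Set.ncard {t : (Finset V × Finset V) × Finset V × Finset V |
        (Base t.1 ∧ CutP t) ∧ AM t.1}
      = Set.ncard {p : Finset V × Finset V | Base p ∧ AM p} := by
    rw [h₀]
    exact Set.ncard_image_of_injective _ (fun a b h => congrArg Prod.fst h)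
  -- the non-AM part has even cardinality
  have heven : 2 ∣ Set.ncard {t : (Finset V × Finset V) × Finset V × Finset V |
      (Base t.1 ∧ CutP t) ∧ ¬ AM t.1} := by
    set S : Set ((Finset V × Finset V) × Finset V × Finset V) :=
      {t | (Base t.1 ∧ CutP t) ∧ ¬ AM t.1} with hS
    have hfin : S.Finite := Set.toFinite _
    rw [Set.ncard_eq_toFinset_card' S]
    have hstep : ∀ t ∈ S.toFinset,
        fccFlip G t ∈ S.toFinset ∧ fccFlip G t ≠ t ∧ fccFlip G (fccFlip G t) = t := by
      intro t ht
      rw [Set.mem_toFinset] at ht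
      obtain ⟨⟨hB, hcut, hMsub⟩, hAMt⟩ := ht
      have hex : ∃ c : (G.induce (↑t.1.1 : Set V)).ConnectedComponent,
          ∀ v : ↥(↑t.1.1 : Set V),
            (G.induce (↑t.1.1 : Set V)).connectedComponentMk v = c → (v : V) ∉ t.1.2 := by
        simp only [hAM] at hAMt
        push_neg at hAMt
        exact hAMt
      have hmem21 : ∀ x, x ∈ (fccFlip G t).2.1 ↔
          (x ∈ t.2.1 ∧ x ∉ fccBadC G t.1) ∨ (x ∈ t.2.2 ∧ x ∈ fccBadC G t.1) := by
        intro x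
        simp only [fccFlip, Finset.mem_union, Finset.mem_sdiff, Finset.mem_inter]
      refine ⟨?_, ?_, ?_⟩
      · -- stays in S
        rw [Set.mem_toFinset]
        show (Base (fccFlip G t).1 ∧ CutP (fccFlip G t)) ∧ ¬ AM (fccFlip G t).1
        have h1 : (fccFlip G t).1 = t.1 := rfl
        rw [h1]
        refine ⟨⟨hB, ?_, ?_⟩, hAMt⟩
        · show ConsCut G t.1.1 (fccFlip G t).2.1 (fccFlip G t).2.2
          exact fcc_flip_cut hcut (fccBadC_closed G t.1 hex)
        · intro m hm
          rw [hmem21]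
          exact Or.inl ⟨hMsub hm, fccBadC_notM G t.1 hex hm⟩
      · -- not fixed
        obtain ⟨x, hxC⟩ := fccBadC_nonempty G t.1 hex
        intro hfix
        have hxY : x ∈ t.1.1 := ((fccBadC_mem G t.1 hex).mp hxC).1
        have hx2 : x ∈ t.2.1 ∪ t.2.2 := by rw [hcut.1]; exact hxY
        rw [Finset.mem_union] at hx2
        have h21 : (fccFlip G t).2.1 = t.2.1 := by rw [hfix]
        rcases hx2 with hxL | hxR
        · have hnot : x ∉ (fccFlip G t).2.1 := by
            rw [hmem21]
            push_neg
            exact ⟨fun _ => hxC, fun hxR' =>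
              absurd hxL (Finset.disjoint_right.mp hcut.2.1 hxR')⟩
          rw [h21] at hnot
          exact hnot hxL
        · have hin : x ∈ (fccFlip G t).2.1 := by
            rw [hmem21]
            exact Or.inr ⟨hxR, hxC⟩
          rw [h21] at hin
          exact absurd hxR (Finset.disjoint_left.mp hcut.2.1 hin)
      · -- involutive
        have h1 : (fccFlip G t).1 = t.1 := rfl
        show (((fccFlip G t).1, _) : (Finset V × Finset V) × Finset V × Finset V) = t
        refine Prod.ext rfl (Prod.ext ?_ ?_)
        · show ((fccFlip G t).2.1 \ fccBadC G (fccFlip G t).1) ∪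
            ((fccFlip G t).2.2 ∩ fccBadC G (fccFlip G t).1) = t.2.1
          rw [show fccBadC G (fccFlip G t).1 = fccBadC G t.1 from rfl]
          show ((t.2.1 \ fccBadC G t.1 ∪ t.2.2 ∩ fccBadC G t.1) \ fccBadC G t.1) ∪
            ((t.2.2 \ fccBadC G t.1 ∪ t.2.1 ∩ fccBadC G t.1) ∩ fccBadC G t.1) = t.2.1
          exact fcc_swap_swap _ _ _
        · show ((fccFlip G t).2.2 \ fccBadC G t.1) ∪
            ((fccFlip G t).2.1 ∩ fccBadC G t.1) = t.2.2
          show ((t.2.2 \ fccBadC G t.1 ∪ t.2.1 ∩ fccBadC G t.1) \ fccBadC G t.1) ∪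
            ((t.2.1 \ fccBadC G t.1 ∪ t.2.2 ∩ fccBadC G t.1) ∩ fccBadC G t.1) = t.2.2
          exact fcc_swap_swap _ _ _
    have hsum : ∑ _x ∈ S.toFinset, (1 : ZMod 2) = 0 := by
      refine Finset.sum_involution (fun t _ => fccFlip G t) (fun t ht => by decide)
        (fun t ht _ => (hstep t ht).2.1) (fun t ht => (hstep t ht).1)
        (fun t ht => (hstep t ht).2.2)
    rw [Finset.sum_const, nsmul_eq_mul, mul_one] at hsum
    exact (ZMod.natCast_eq_zero_iff _ 2).mp hsum
  obtain ⟨m, hm⟩ := heven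
  rw [h₀card, hm]
  show _ % 2 = _ % 2
  omega
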